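/- arXiv:1509.01958 — 2 statements merged into one kernel-verified Lean document; each statement's English description precedes it below -/
import Mathlib

section
/- For every i ≥ 2, there exist positive integers β_1, …, β_i such that β_j divides N_j and β_j > 1 for each 1 ≤ j ≤ i, and the multiplicative order of a_i equals ∏_{j=1}^{i} β_j. -/
/-- The `j`-th Fermat number `N_j = 2^(2^j) + 1`. -/
def fermatN (j : ℕ) : ℕ := 2 ^ 2 ^ j + 1

/-- `conwayL c n` is the subfield `L_{n-1}` of the algebraic closure of `F_2`
generated over `F_2` by `c 0, …, c (n-1)`; in particular `conwayL c 0 = ⊥ = F_2`. -/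
noncomputable def conwayL (c : ℕ → AlgebraicClosure (ZMod 2)) (n : ℕ) :
    IntermediateField (ZMod 2) (AlgebraicClosure (ZMod 2)) :=
  IntermediateField.adjoin (ZMod 2) (c '' Set.Iio n)

namespace ConwayAux
open IntermediateField

abbrev AC := AlgebraicClosure (ZMod 2)

variable (c : ℕ → AC)

lemma char2 (x y : AC) : x + y = 0 ↔ x = y := by
  rw [← CharTwo.sub_eq_add, sub_eq_zero]

lemma image_Iio_succ (n : ℕ) : c '' Set.Iio (n+1) = c '' Set.Iio n ∪ {c n} := by
  ext x
  simp only [Set.mem_union, Set.mem_image, Set.mem_Iio, Set.mem_singleton_iff]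
  constructor
  · rintro ⟨j, hj, rfl⟩
    rcases Nat.lt_succ_iff_lt_or_eq.mp hj with h | rfl
    · exact Or.inl ⟨j, h, rfl⟩
    · exact Or.inr rfl
  · rintro (⟨j, hj, rfl⟩ | rfl)
    · exact ⟨j, by omega, rfl⟩
    · exact ⟨n, by omega, rfl⟩

lemma conwayL_succ (n : ℕ) :
    (IntermediateField.adjoin (conwayL c n) {c n}).restrictScalars (ZMod 2) = conwayL c (n+1) := by
  rw [conwayL, conwayL, adjoin_adjoin_left, image_Iio_succ]

lemma mem_conwayL {i n : ℕ} (h : i < n) : c i ∈ conwayL c n :=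
  IntermediateField.subset_adjoin _ _ ⟨i, h, rfl⟩

instance conwayL_fd (n : ℕ) : FiniteDimensional (ZMod 2) (conwayL c n) := by
  have : Finite (c '' Set.Iio n) := Set.Finite.image c (Set.finite_Iio n)
  exact IntermediateField.finiteDimensional_adjoin fun x _ =>
    (IsAlgebraic.isIntegral (Algebra.IsAlgebraic.isAlgebraic x))

variable {c}
variable (hc0 : c 0 ^ 2 + c 0 + 1 = 0)
variable (hrec : ∀ i : ℕ, c (i + 1) ^ 2 + c (i + 1) + ∏ j ∈ Finset.range (i + 1), c j = 0)
variable (hnot : ∀ i : ℕ, c (i + 1) ∉ conwayL c (i + 1))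

include hc0 in
lemma c0_ne_zero : c 0 ≠ 0 := by
  rintro h; rw [h] at hc0; simp at hc0

include hc0 in
lemma c0_ne_one : c 0 ≠ 1 := by
  rintro h; rw [h] at hc0
  have h2 : (1 : AC) + 1 = 0 := CharTwo.add_self_eq_zero 1
  rw [one_pow, show (1:AC)+1+1 = (1+1)+1 by ring, h2, zero_add] at hc0
  exact one_ne_zero hc0

include hc0 hnot in
lemma c_not_mem (n : ℕ) : c n ∉ conwayL c n := by
  cases n with
  | zero =>
    intro h
    rw [conwayL, show Set.Iio 0 = (∅ : Set ℕ) by ext x; simp, Set.image_empty,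
      IntermediateField.adjoin_empty] at h
    rw [IntermediateField.mem_bot] at h
    obtain ⟨r, hr⟩ := h
    fin_cases r
    · simp at hr; exact c0_ne_zero hc0 (hr.symm.trans (map_zero _))
    · simp at hr; exact c0_ne_one hc0 hr.symm
  | succ m => exact hnot m

include hc0 hnot in
lemma finrank_conwayL_ge (n : ℕ) : 2 ^ n ≤ Module.finrank (ZMod 2) (conwayL c n) := by
  induction n with
  | zero => rw [pow_zero]; exact Module.finrank_pos
  | succ m ih =>
    have hstep : 2 ≤ Module.finrank (conwayL c m) (IntermediateField.adjoin (conwayL c m) {c m}) := by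
      have hfd : FiniteDimensional (conwayL c m) (IntermediateField.adjoin (conwayL c m) {c m}) :=
        IntermediateField.adjoin.finiteDimensional
          (IsAlgebraic.isIntegral (Algebra.IsAlgebraic.isAlgebraic _))
      have hpos : 0 < Module.finrank (conwayL c m) (IntermediateField.adjoin (conwayL c m) {c m}) :=
        Module.finrank_pos
      have hne : Module.finrank (conwayL c m) (IntermediateField.adjoin (conwayL c m) {c m}) ≠ 1 := by
        intro h1
        rw [IntermediateField.finrank_eq_one_iff] at h1
        have hmem : c m ∈ (⊥ : IntermediateField (conwayL c m) AC) := by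
          rw [← h1]; exact IntermediateField.mem_adjoin_simple_self _ _
        rw [IntermediateField.mem_bot] at hmem
        obtain ⟨⟨r, hrmem⟩, hr⟩ := hmem
        exact c_not_mem hc0 hnot m (hr ▸ hrmem)
      omega
    calc 2 ^ (m+1) = 2 ^ m * 2 := by ring
    _ ≤ Module.finrank (ZMod 2) (conwayL c m) *
        Module.finrank (conwayL c m) (IntermediateField.adjoin (conwayL c m) {c m}) :=
      Nat.mul_le_mul ih hstep
    _ = Module.finrank (ZMod 2)
        ((IntermediateField.adjoin (conwayL c m) {c m}).restrictScalars (ZMod 2)) :=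
      by rw [Module.finrank_mul_finrank (ZMod 2) (conwayL c m) (IntermediateField.adjoin (conwayL c m) {c m})]; rfl
    _ = Module.finrank (ZMod 2) (conwayL c (m+1)) := by rw [conwayL_succ]


lemma pow_fixed_of_mem (n : ℕ) (hfix : ∀ k < n, c k ^ 2 ^ 2 ^ n = c k)
    {x : AC} (hx : x ∈ conwayL c n) : x ^ 2 ^ 2 ^ n = x := by
  induction hx using IntermediateField.adjoin_induction with
  | mem s hs => obtain ⟨k, hk, rfl⟩ := hs; exact hfix k hk
  | algebraMap r =>
    rw [← map_pow]
    congr 1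
    fin_cases r
    · exact zero_pow (by positivity)
    · exact one_pow _
  | add x y hx hy ihx ihy => rw [add_pow_char_pow, ihx, ihy]
  | inv x hx ihx => rw [inv_pow, ihx]
  | mul x y hx hy ihx ihy => rw [mul_pow, ihx, ihy]


include hc0 hnot in
lemma mem_of_pow_fixed (n : ℕ) (hfix : ∀ k < n, c k ^ 2 ^ 2 ^ n = c k)
    {x : AC} (hx : x ^ 2 ^ 2 ^ n = x) : x ∈ conwayL c n := by
  classical
  set q : ℕ := 2 ^ 2 ^ n with hq
  have hq1 : 1 < q := by
    have h1 : 1 ≤ 2 ^ n := Nat.one_le_two_pow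
    calc 1 < 2 ^ 1 := by norm_num
    _ ≤ 2 ^ 2 ^ n := Nat.pow_le_pow_right (by norm_num) h1
  have hfin : Finite (conwayL c n) := Module.finite_of_finite (ZMod 2)
  have hfint : Fintype (conwayL c n) := Fintype.ofFinite _
  -- the polynomial X^q - X
  set p : Polynomial AC := Polynomial.X ^ q - Polynomial.X with hp
  have hpdeg : p.natDegree = q := by
    rw [hp, Polynomial.natDegree_sub_eq_left_of_natDegree_lt, Polynomial.natDegree_X_pow]
    rw [Polynomial.natDegree_X_pow, Polynomial.natDegree_X]
    exact hq1
  have hpne : p ≠ 0 := by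
    intro h0
    rw [h0] at hpdeg
    simp at hpdeg
    omega
  -- the finset of elements of conwayL c n
  have hfins : Fintype ((conwayL c n : Set AC)) := hfint
  set Z : Finset AC := (conwayL c n : Set AC).toFinset with hZ
  have hZmem : ∀ y : AC, y ∈ Z ↔ y ∈ conwayL c n := by
    intro y; rw [hZ, Set.mem_toFinset]; rfl
  have hZcard : Z.card = Fintype.card (conwayL c n) := by
    rw [hZ, Set.toFinset_card]; rfl
  have hcard_ge : q ≤ Z.card := by
    rw [hZcard, Module.card_eq_pow_finrank (K := ZMod 2), ZMod.card]
    exact Nat.pow_le_pow_right (by norm_num) (finrank_conwayL_ge hc0 hnot n)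
  have hroot : ∀ y : AC, y ∈ conwayL c n → p.eval y = 0 := by
    intro y hy
    have := pow_fixed_of_mem n hfix hy
    simp [hp, hq, this]
  have hZsub : Z.val ⊆ p.roots := by
    intro y hy
    rw [Polynomial.mem_roots hpne]
    exact hroot _ ((hZmem y).mp hy)
  have hZle : Z.card ≤ p.natDegree := Polynomial.card_le_degree_of_subset_roots hZsub
  -- x is a root
  have hxroot : x ∈ p.roots := by
    rw [Polynomial.mem_roots hpne]
    simp [hp, Polynomial.IsRoot, hx]
  -- roots has card ≤ q = Z.card, so roots.toFinset = Z... use multiset argument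
  have hZsub' : Z ⊆ p.roots.toFinset := fun y hy => Multiset.mem_toFinset.mpr (hZsub hy)
  have hcard2 : p.roots.toFinset.card ≤ Z.card := by
    calc p.roots.toFinset.card ≤ Multiset.card p.roots := Multiset.toFinset_card_le _
    _ ≤ p.natDegree := Polynomial.card_roots' p
    _ = q := hpdeg
    _ ≤ Z.card := hcard_ge
  have hEq : p.roots.toFinset = Z := (Finset.eq_of_subset_of_card_le hZsub' hcard2).symm
  have hxz : x ∈ Z := by rw [← hEq]; exact Multiset.mem_toFinset.mpr hxroot
  exact (hZmem x).mp hxz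


include hc0 in
lemma c0_cube : c 0 ^ 3 = 1 := by
  have h1 : c 0 ^ 2 = c 0 + 1 := by
    have h := hc0
    rw [show c 0 ^ 2 + c 0 + 1 = c 0 ^ 2 + (c 0 + 1) by ring, char2] at h
    exact h
  calc c 0 ^ 3 = c 0 ^ 2 * c 0 := by ring
  _ = (c 0 + 1) * c 0 := by rw [h1]
  _ = c 0 ^ 2 + c 0 := by ring
  _ = (c 0 + 1) + c 0 := by rw [h1]
  _ = (c 0 + c 0) + 1 := by ring
  _ = 1 := by rw [CharTwo.add_self_eq_zero, zero_add]

lemma pow_up {x : AC} {m : ℕ} (h : x ^ 2 ^ 2 ^ m = x) : ∀ r, m ≤ r → x ^ 2 ^ 2 ^ r = x := by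
  intro r hr
  induction r, hr using Nat.le_induction with
  | base => exact h
  | succ r hr ih =>
    have : (2:ℕ) ^ 2 ^ (r+1) = 2 ^ 2 ^ r * 2 ^ 2 ^ r := by
      rw [← pow_add, ← two_mul, ← pow_succ']
    rw [this, pow_mul, ih, ih]

include hc0 hrec hnot in
lemma cstep : ∀ i : ℕ, c (i+1) ^ 2 ^ 2 ^ (i+1) = c (i+1) + 1 := by
  intro i
  induction i using Nat.strong_induction_on with
  | _ i ih =>
  have Tfix : ∀ k, k ≤ i → c k ^ 2 ^ 2 ^ (k+1) = c k := by
    intro k hk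
    cases k with
    | zero =>
      have : (2:ℕ) ^ 2 ^ 1 = 4 := by norm_num
      rw [this, show (4:ℕ) = 3 + 1 by norm_num, pow_add, c0_cube hc0, one_mul, pow_one]
    | succ m =>
      have hm : c (m+1) ^ 2 ^ 2 ^ (m+1) = c (m+1) + 1 := ih m (by omega)
      have : (2:ℕ) ^ 2 ^ (m+2) = 2 ^ 2 ^ (m+1) * 2 ^ 2 ^ (m+1) := by
        rw [← pow_add, ← two_mul, ← pow_succ']
      rw [this, pow_mul, hm, add_pow_char_pow, hm, one_pow]
      rw [show c (m+1) + 1 + 1 = c (m+1) + (1 + 1) by ring, CharTwo.add_self_eq_zero, add_zero]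
  have up : ∀ k, k ≤ i → c k ^ 2 ^ 2 ^ (i+1) = c k := fun k hk =>
    pow_up (Tfix k hk) (i+1) (by omega)
  set q : ℕ := 2 ^ 2 ^ (i+1) with hqdef
  set A : AC := ∏ j ∈ Finset.range (i+1), c j with hA
  have afix : A ^ q = A := by
    rw [hA, ← Finset.prod_pow]
    exact Finset.prod_congr rfl fun j hj => up j (Nat.lt_succ_iff.mp (Finset.mem_range.mp hj))
  have hA0 : c (i+1) ^ 2 + c (i+1) + A = 0 := hrec i
  set y : AC := c (i+1) ^ q with hy
  have hyeq : y ^ 2 + y + A = 0 := by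
    have := congrArg (· ^ q) hA0
    rw [zero_pow (by positivity), add_pow_char_pow, add_pow_char_pow] at this
    rw [← pow_mul, mul_comm 2 q, pow_mul, afix] at this
    exact this
  -- (y + c) * (y + c + 1) = 0
  have hsum : (y + c (i+1)) ^ 2 + (y + c (i+1)) = 0 := by
    have h1 : y ^ 2 + y = c (i+1) ^ 2 + c (i+1) := by
      have := congrArg₂ (· + ·) hyeq hA0
      simp only [add_zero] at this
      rw [show y ^ 2 + y + A + (c (i+1) ^ 2 + c (i+1) + A)
        = (y ^ 2 + y) + ((c (i+1) ^ 2 + c (i+1)) + (A + A)) by ring,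
        CharTwo.add_self_eq_zero, add_zero, char2] at this
      exact this
    have hexp : (y + c (i+1)) ^ 2 = y ^ 2 + c (i+1) ^ 2 := add_pow_char ..
    rw [hexp, show y ^ 2 + c (i+1) ^ 2 + (y + c (i+1)) = (y ^ 2 + y) + (c (i+1) ^ 2 + c (i+1)) by ring,
      h1, CharTwo.add_self_eq_zero]
  have hfactor : (y + c (i+1)) * (y + c (i+1) + 1) = 0 := by
    rw [show (y + c (i+1)) * (y + c (i+1) + 1) = (y + c (i+1)) ^ 2 + (y + c (i+1)) by ring, hsum]
  rcases mul_eq_zero.mp hfactor with hcase | hcase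
  · exfalso
    rw [char2] at hcase
    have hmem : c (i+1) ∈ conwayL c (i+1) := by
      apply mem_of_pow_fixed hc0 hnot (i+1) (fun k hk => up k (by omega))
      show c (i+1) ^ q = c (i+1)
      exact hcase
    exact hnot i hmem
  · rw [show y + c (i+1) + 1 = y + (c (i+1) + 1) by ring, char2] at hcase
    exact hcase

include hc0 hrec hnot in
lemma fix_all : ∀ n, ∀ k, k < n → c k ^ 2 ^ 2 ^ n = c k := by
  intro n k hk
  have T : c k ^ 2 ^ 2 ^ (k+1) = c k := by
    cases k with
    | zero =>
      rw [show (2:ℕ) ^ 2 ^ 1 = 4 by norm_num, show (4:ℕ) = 3 + 1 by norm_num, pow_add,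
        c0_cube hc0, one_mul, pow_one]
    | succ m =>
      have hm := cstep hc0 hrec hnot m
      have hsq : (2:ℕ) ^ 2 ^ (m+2) = 2 ^ 2 ^ (m+1) * 2 ^ 2 ^ (m+1) := by
        rw [← pow_add, ← two_mul, ← pow_succ']
      rw [hsq, pow_mul, hm, add_pow_char_pow, hm, one_pow,
        show c (m+1) + 1 + 1 = c (m+1) + (1 + 1) by ring, CharTwo.add_self_eq_zero, add_zero]
  exact pow_up T n (by omega)


lemma fermatN_eq : fermatN = Nat.fermatNumber := rfl

lemma prod_fermatN (m : ℕ) : ∏ j ∈ Finset.range m, fermatN j = 2 ^ 2 ^ m - 1 := by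
  rw [fermatN_eq, Nat.prod_fermatNumber]
  have : Nat.fermatNumber m = 2 ^ 2 ^ m + 1 := rfl
  omega

include hc0 hnot in
lemma c_ne_zero (j : ℕ) : c j ≠ 0 := by
  cases j with
  | zero => exact c0_ne_zero hc0
  | succ m => exact fun h => hnot m (by rw [h]; exact zero_mem _)

include hc0 hnot in
lemma a_ne_zero (i : ℕ) : (∏ j ∈ Finset.range (i+1), c j) ≠ 0 :=
  Finset.prod_ne_zero_iff.mpr fun j _ => c_ne_zero hc0 hnot j

lemma a_mem {i n : ℕ} (h : i < n) : (∏ j ∈ Finset.range (i+1), c j) ∈ conwayL c n :=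
  prod_mem fun j hj => mem_conwayL c (lt_of_lt_of_le (Finset.mem_range.mp hj) h)

include hc0 hrec hnot in
lemma rel (i : ℕ) :
    (∏ j ∈ Finset.range (i+2), c j) ^ fermatN (i+1) = (∏ j ∈ Finset.range (i+1), c j) ^ 3 := by
  set q : ℕ := 2 ^ 2 ^ (i+1) with hq
  set A : AC := ∏ j ∈ Finset.range (i+1), c j with hA
  have afix : A ^ q = A := by
    rw [hA, ← Finset.prod_pow]
    exact Finset.prod_congr rfl fun j hj => fix_all hc0 hrec hnot (i+1) j (Finset.mem_range.mp hj)
  have hstep : c (i+1) ^ q = c (i+1) + 1 := cstep hc0 hrec hnot i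
  have hsplit : (∏ j ∈ Finset.range (i+2), c j) = A * c (i+1) := Finset.prod_range_succ c (i+1)
  have hVal : c (i+1) ^ 2 + c (i+1) = A := by
    have h := hrec i
    rw [← hA, show c (i+1) ^ 2 + c (i+1) + A = (c (i+1) ^ 2 + c (i+1)) + A by ring, char2] at h
    exact h
  have hN : fermatN (i+1) = q + 1 := rfl
  rw [hsplit, hN]
  calc (A * c (i+1)) ^ (q + 1) = (A * c (i+1)) ^ q * (A * c (i+1)) := pow_succ _ _
  _ = (A ^ q * c (i+1) ^ q) * (A * c (i+1)) := by rw [mul_pow]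
  _ = (A * (c (i+1) + 1)) * (A * c (i+1)) := by rw [afix, hstep]
  _ = A ^ 2 * (c (i+1) ^ 2 + c (i+1)) := by ring
  _ = A ^ 2 * A := by rw [hVal]
  _ = A ^ 3 := by ring

include hc0 hrec hnot in
lemma ord_main : ∀ i, 1 ≤ i → ∃ β : ℕ → ℕ,
    (∀ j : ℕ, 1 ≤ j → j ≤ i → β j ∣ fermatN j ∧ 1 < β j) ∧
    orderOf (∏ j ∈ Finset.range (i + 1), c j) = ∏ j ∈ Finset.Icc 1 i, β j := by
  intro i hi
  induction i with
  | zero => omega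
  | succ n ihn =>
    rcases Nat.lt_or_ge n 1 with hn | hn
    · -- base case : n = 0, i = 1
      interval_cases n
      have h5 : (∏ j ∈ Finset.range 2, c j) ^ (5:ℕ) = 1 := by
        have h := rel hc0 hrec hnot 0
        rw [show fermatN 1 = 5 from rfl] at h
        rw [h, Finset.prod_range_one]
        exact c0_cube hc0
      have hdvd : orderOf (∏ j ∈ Finset.range 2, c j) ∣ 5 := orderOf_dvd_of_pow_eq_one h5
      have hne1 : (∏ j ∈ Finset.range 2, c j) ≠ 1 := by
        intro h1
        rw [Finset.prod_range_succ, Finset.prod_range_one] at h1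
        have hinv : c 1 = (c 0)⁻¹ := eq_inv_of_mul_eq_one_left (by rw [mul_comm]; exact h1)
        have : c 1 ∈ conwayL c 1 := hinv ▸ inv_mem (mem_conwayL c (by norm_num))
        exact hnot 0 this
      have hord : orderOf (∏ j ∈ Finset.range 2, c j) = 5 := by
        rcases (Nat.Prime.eq_one_or_self_of_dvd (by norm_num : Nat.Prime 5) _ hdvd) with h | h
        · exact absurd (orderOf_eq_one_iff.mp h) hne1
        · exact h
      exact ⟨fun _ => 5, fun j hj1 hj2 => by
        have : j = 1 := by omega
        subst this
        exact ⟨dvd_refl _, by norm_num⟩,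
        by rw [hord, Finset.Icc_self, Finset.prod_singleton]⟩
    · -- inductive step, n ≥ 1
      obtain ⟨β, hβ, hord⟩ := ihn hn
      set x : AC := ∏ j ∈ Finset.range (n+2), c j with hx
      set A : AC := ∏ j ∈ Finset.range (n+1), c j with hA
      have hd_dvd : orderOf A ∣ ∏ j ∈ Finset.Icc 1 n, fermatN j := by
        rw [hord]
        exact Finset.prod_dvd_prod_of_dvd _ _ fun j hj =>
          (hβ j (Finset.mem_Icc.mp hj).1 (Finset.mem_Icc.mp hj).2).1
      have dpos : 0 < orderOf A := by
        rw [hord]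
        exact Finset.prod_pos fun j hj =>
          lt_trans one_pos (hβ j (Finset.mem_Icc.mp hj).1 (Finset.mem_Icc.mp hj).2).2
      have cop3 : Nat.Coprime 3 (orderOf A) := by
        apply Nat.Coprime.coprime_dvd_right hd_dvd
        apply Nat.Coprime.prod_right
        intro j hj
        have : (0:ℕ) ≠ j := by have := (Finset.mem_Icc.mp hj).1; omega
        have h := Nat.coprime_fermatNumber_fermatNumber this
        rw [fermatN_eq]
        exact h
      have h3 : orderOf (A ^ (3:ℕ)) = orderOf A := Nat.Coprime.orderOf_pow cop3.symm
      have hrel : x ^ fermatN (n+1) = A ^ (3:ℕ) := rel hc0 hrec hnot n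
      have hdvd1 : orderOf A ∣ orderOf x := by
        rw [← h3, ← hrel]
        exact orderOf_pow_dvd (fermatN (n+1))
      have hx_pow : x ^ (fermatN (n+1) * orderOf A) = 1 := by
        rw [pow_mul, hrel, ← h3]
        exact pow_orderOf_eq_one _
      have hdvd2 : orderOf x ∣ fermatN (n+1) * orderOf A := orderOf_dvd_of_pow_eq_one hx_pow
      obtain ⟨e, he⟩ := hdvd1
      have hNpos : 0 < fermatN (n+1) := by
        have : (3:ℕ) ≤ fermatN (n+1) := by
          rw [fermatN_eq]; exact Nat.three_le_fermatNumber _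
        omega
      have he_dvd : e ∣ fermatN (n+1) := by
        have h2 : orderOf A * e ∣ orderOf A * fermatN (n+1) := by
          rw [← he, mul_comm (orderOf A) (fermatN (n+1))]
          exact hdvd2
        exact (mul_dvd_mul_iff_left (by omega : orderOf A ≠ 0)).mp h2
      have he0 : e ≠ 0 := by
        intro h0
        rw [h0, mul_zero] at he
        rw [he] at hdvd2
        have h1 := Nat.eq_zero_of_zero_dvd hdvd2
        have h2 := Nat.mul_pos hNpos dpos
        omega
      have he_gt : 1 < e := by
        by_contra hle
        have he1 : e = 1 := by omega
        rw [he1, mul_one] at he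
        have hdd : orderOf A ∣ 2 ^ 2 ^ (n+1) - 1 := by
          rw [← prod_fermatN (n+1)]
          exact hd_dvd.trans (Finset.prod_dvd_prod_of_subset _ _ _ fun j hj => by
            rw [Finset.mem_range]; have := (Finset.mem_Icc.mp hj).2; omega)
        have hq1 : (1:ℕ) ≤ 2 ^ 2 ^ (n+1) := Nat.one_le_two_pow
        have hxfix : x ^ 2 ^ 2 ^ (n+1) = x := by
          have hpow : x ^ (2 ^ 2 ^ (n+1) - 1) = 1 :=
            orderOf_dvd_iff_pow_eq_one.mp (he ▸ hdd)
          calc x ^ 2 ^ 2 ^ (n+1) = x ^ (2 ^ 2 ^ (n+1) - 1 + 1) := by rw [Nat.sub_add_cancel hq1]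
          _ = x ^ (2 ^ 2 ^ (n+1) - 1) * x := pow_succ _ _
          _ = x := by rw [hpow, one_mul]
        have hxmem : x ∈ conwayL c (n+1) :=
          mem_of_pow_fixed hc0 hnot (n+1) (fix_all hc0 hrec hnot (n+1)) hxfix
        have hAmem : A ∈ conwayL c (n+1) := a_mem (by omega)
        have hAne : A ≠ 0 := a_ne_zero hc0 hnot n
        have hc_mem : c (n+1) ∈ conwayL c (n+1) := by
          have hxA : x = A * c (n+1) := Finset.prod_range_succ c (n+1)
          have : c (n+1) = A⁻¹ * x := by
            rw [hxA, ← mul_assoc, inv_mul_cancel₀ hAne, one_mul]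
          rw [this]
          exact mul_mem (inv_mem hAmem) hxmem
        exact hnot n hc_mem
      refine ⟨Function.update β (n+1) e, ?_, ?_⟩
      · intro j hj1 hj2
        rcases Nat.lt_or_ge j (n+1) with hlt | hge
        · rw [Function.update_of_ne (by omega)]
          exact hβ j hj1 (by omega)
        · have : j = n+1 := by omega
          subst this
          rw [Function.update_self]
          exact ⟨he_dvd, he_gt⟩
      · rw [Finset.prod_Icc_succ_top (by omega : 1 ≤ n+1), Function.update_self]
        have hprod : ∏ j ∈ Finset.Icc 1 n, Function.update β (n+1) e j
            = ∏ j ∈ Finset.Icc 1 n, β j := by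
          apply Finset.prod_congr rfl
          intro j hj
          exact Function.update_of_ne (by have := (Finset.mem_Icc.mp hj).2; omega) _ _
        rw [hprod, ← hord, ← he]


end ConwayAux

/-- For every `i ≥ 2`, there exist positive integers `β_1, …, β_i` with
`β_j ∣ N_j` and `β_j > 1` for `1 ≤ j ≤ i`, such that the multiplicative order
of `a_i = ∏_{j=0}^{i} c_j` equals `∏_{j=1}^{i} β_j`. -/
theorem conway_orderOf_a (c : ℕ → AlgebraicClosure (ZMod 2))
    (hc0 : c 0 ^ 2 + c 0 + 1 = 0)
    (hrec : ∀ i : ℕ, c (i + 1) ^ 2 + c (i + 1) + ∏ j ∈ Finset.range (i + 1), c j = 0)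
    (hnot : ∀ i : ℕ, c (i + 1) ∉ conwayL c (i + 1))
    (i : ℕ) (hi : 2 ≤ i) :
    ∃ β : ℕ → ℕ, (∀ j : ℕ, 1 ≤ j → j ≤ i → β j ∣ fermatN j ∧ 1 < β j) ∧
      orderOf (∏ j ∈ Finset.range (i + 1), c j) = ∏ j ∈ Finset.Icc 1 i, β j := by
  exact ConwayAux.ord_main hc0 hrec hnot i (by omega)
end

section
/- For every i ≥ 2, O(c_i · c_0) = N_0 · O(c_i) = 3 · O(c_i) and O(a_i · a_0) = N_0 · O(a_i) = 3 · O(a_i), where a_0 = c_0. -/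
namespace ConwayAux

open Finset

local notation "F" => AlgebraicClosure (ZMod 2)

/-- `a i = ∏_{j=0}^{i} c j`. -/
noncomputable def A (c : ℕ → F) (i : ℕ) : F := ∏ j ∈ Finset.range (i + 1), c j

/-- `D i = (2^(2^(i+1)) - 1)/3`. -/
def D : ℕ → ℕ
  | 0 => 1
  | i + 1 => D i * (2 ^ 2 ^ (i + 1) + 1)

lemma hD : ∀ i : ℕ, 3 * D i + 1 = 2 ^ 2 ^ (i + 1)
  | 0 => rfl
  | i + 1 => by
    have h := hD i
    rw [show (2:ℕ) ^ (i + 2) = 2 ^ (i + 1) * 2 from pow_succ 2 (i + 1), pow_mul,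
      show D (i + 1) = D i * (2 ^ 2 ^ (i + 1) + 1) from rfl, ← h]
    ring

lemma hD3 : ∀ i : ℕ, ¬ 3 ∣ D i
  | 0 => by decide
  | i + 1 => by
    have h1 := hD3 i
    have h2 : (2 ^ 2 ^ (i + 1) + 1) % 3 = 2 := by
      rw [show (2:ℕ) ^ (i + 1) = 2 * 2 ^ i from by rw [pow_succ]; ring, pow_mul,
        Nat.add_mod, Nat.pow_mod]
      norm_num
    intro hdvd
    rcases (Nat.Prime.dvd_mul (by norm_num)).1 hdvd with h | h
    · exact h1 h
    · omega

section Field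

variable (c : ℕ → F) (hc0 : c 0 ^ 2 + c 0 + 1 = 0)
  (hrec : ∀ i : ℕ, c (i + 1) ^ 2 + c (i + 1) + ∏ j ∈ Finset.range (i + 1), c j = 0)

lemma htwo : (2 : F) = 0 := CharTwo.two_eq_zero

lemma A_zero : A c 0 = c 0 := by simp [A]

lemma A_succ (i : ℕ) : A c (i + 1) = A c i * c (i + 1) := Finset.prod_range_succ _ _

include hc0 in
lemma sq0 : c 0 ^ 2 = c 0 + 1 := by
  linear_combination hc0 - (c 0 + 1) * htwo

include hrec in
lemma sqS (i : ℕ) : c (i + 1) ^ 2 = c (i + 1) + A c i := by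
  simp only [A]
  linear_combination hrec i - (c (i + 1) + ∏ j ∈ Finset.range (i + 1), c j) * htwo

include hc0 hrec in
lemma ne0 : ∀ i : ℕ, c i ≠ 0 ∧ A c i ≠ 0
  | 0 => by
    have hc : c 0 ≠ 0 := by
      intro h
      rw [h] at hc0
      simp at hc0
    exact ⟨hc, by rw [A_zero]; exact hc⟩
  | i + 1 => by
    have ih := ne0 i
    have hc : c (i + 1) ≠ 0 := by
      intro h
      have h' := hrec i
      rw [h] at h'
      simp at h'
      exact ih.2 (by rw [A]; exact h')
    exact ⟨hc, by rw [A_succ]; exact mul_ne_zero ih.2 hc⟩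

include hrec in
lemma frob_iter (i : ℕ) : ∀ m : ℕ,
    c (i + 1) ^ 2 ^ m = c (i + 1) + ∑ t ∈ Finset.range m, (A c i) ^ 2 ^ t
  | 0 => by simp
  | m + 1 => by
    have ih := frob_iter i m
    have hstep : c (i + 1) ^ 2 ^ (m + 1) = (c (i + 1) ^ 2 ^ m) ^ 2 := by
      rw [← pow_mul, pow_succ]
    have hterm : ∀ t : ℕ, ((A c i) ^ 2 ^ t) ^ 2 = (A c i) ^ 2 ^ (t + 1) := fun t => by
      rw [← pow_mul, pow_succ]
    rw [hstep, ih, CharTwo.add_sq, CharTwo.sum_sq, sqS c hrec i,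
      Finset.sum_congr rfl fun t _ => hterm t, Finset.sum_range_succ']
    simp only [pow_zero, pow_one]
    ring

include hc0 hrec in
lemma main : ∀ i : ℕ, c i ^ 2 ^ 2 ^ i = c i + 1 ∧
    (A c i) ^ 2 ^ 2 ^ (i + 1) = A c i ∧
    ∑ t ∈ Finset.range (2 ^ (i + 1)), (A c i) ^ 2 ^ t = 1
  | 0 => by
    have hs := sq0 c hc0
    refine ⟨by simpa using hs, ?_, ?_⟩
    · have h4 : (2:ℕ) ^ 2 ^ 1 = 2 * 2 := by norm_num
      rw [h4, A_zero, pow_mul, hs, CharTwo.add_sq, hs, one_pow]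
      linear_combination htwo
    · rw [show (2:ℕ) ^ 1 = 2 from rfl, Finset.sum_range_succ, Finset.sum_range_one,
        A_zero, pow_zero, pow_one, pow_one, hs]
      linear_combination c 0 * htwo
  | i + 1 => by
    obtain ⟨h1, h2', h3⟩ := main i
    have ha : c (i + 1) ^ 2 ^ 2 ^ (i + 1) = c (i + 1) + 1 := by
      rw [frob_iter c hrec i (2 ^ (i + 1)), h3]
    have hb : A c (i + 1) ^ 2 ^ 2 ^ (i + 1) = A c (i + 1) + A c i := by
      rw [A_succ, mul_pow, h2', ha]
      ring
    refine ⟨ha, ?_, ?_⟩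
    · have hsplit : (2:ℕ) ^ 2 ^ (i + 2) = (2 ^ 2 ^ (i + 1)) * 2 ^ 2 ^ (i + 1) := by
        rw [← pow_add, show (2:ℕ) ^ (i + 2) = 2 ^ (i + 1) + 2 ^ (i + 1) from by
          rw [pow_succ]; ring]
      rw [hsplit, pow_mul, hb, add_pow_char_pow, hb, h2']
      linear_combination (A c i) * htwo
    · have hsplit : (2:ℕ) ^ (i + 2) = 2 ^ (i + 1) + 2 ^ (i + 1) := by rw [pow_succ]; ring
      have key : ∀ t : ℕ, A c (i + 1) ^ 2 ^ (2 ^ (i + 1) + t) =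
          A c (i + 1) ^ 2 ^ t + (A c i) ^ 2 ^ t := by
        intro t
        rw [pow_add, pow_mul, hb, add_pow_char_pow]
      rw [hsplit, Finset.sum_range_add]
      simp only [key]
      rw [Finset.sum_add_distrib, h3, ← add_assoc, CharTwo.add_self_eq_zero, zero_add]

include hc0 hrec in
lemma normA (i : ℕ) : A c (i + 1) ^ D (i + 1) = 1 := by
  obtain ⟨h1, h2', h3⟩ := main c hc0 hrec i
  have ha : c (i + 1) ^ 2 ^ 2 ^ (i + 1) = c (i + 1) + 1 := by
    rw [frob_iter c hrec i (2 ^ (i + 1)), h3]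
  -- A (i+1) ^ (e+1) = A i ^ 3
  have e1 : A c (i + 1) ^ (2 ^ 2 ^ (i + 1) + 1) = A c i ^ 3 := by
    rw [pow_succ, A_succ, mul_pow, h2', ha]
    have hsq := sqS c hrec i
    linear_combination (A c i) ^ 2 * hsq + (A c i) ^ 2 * c (i + 1) * htwo
  -- A i ^ (3 * D i) = 1
  have e2 : A c i ^ (3 * D i) = 1 := by
    have hAne : A c i ≠ 0 := (ne0 c hc0 hrec i).2
    have : A c i * A c i ^ (3 * D i) = A c i * 1 := by
      rw [mul_one, ← pow_succ', hD i, h2']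
    exact mul_left_cancel₀ hAne this
  calc A c (i + 1) ^ D (i + 1)
      = (A c (i + 1) ^ (2 ^ 2 ^ (i + 1) + 1)) ^ D i := by
        rw [← pow_mul, show D (i + 1) = D i * (2 ^ 2 ^ (i + 1) + 1) from rfl, mul_comm]
    _ = (A c i ^ 3) ^ D i := by rw [e1]
    _ = 1 := by rw [← pow_mul, e2]

include hc0 hrec in
lemma normC (i : ℕ) : c (i + 2) ^ D (i + 2) = 1 := by
  obtain ⟨h1, h2', h3⟩ := main c hc0 hrec (i + 1)
  have ha : c (i + 2) ^ 2 ^ 2 ^ (i + 2) = c (i + 2) + 1 := by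
    rw [frob_iter c hrec (i + 1) (2 ^ (i + 2)), h3]
  have e1 : c (i + 2) ^ (2 ^ 2 ^ (i + 2) + 1) = A c (i + 1) := by
    rw [pow_succ, ha]
    have hsq := sqS c hrec (i + 1)
    linear_combination hsq + c (i + 2) * htwo
  calc c (i + 2) ^ D (i + 2)
      = (c (i + 2) ^ (2 ^ 2 ^ (i + 2) + 1)) ^ D (i + 1) := by
        rw [← pow_mul, show D (i + 2) = D (i + 1) * (2 ^ 2 ^ (i + 2) + 1) from rfl, mul_comm]
    _ = A c (i + 1) ^ D (i + 1) := by rw [e1]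
    _ = 1 := normA c hc0 hrec i

include hc0 in
lemma ord_c0 : orderOf (c 0) = 3 := by
  have hs := sq0 c hc0
  have h3 : c 0 ^ 3 = 1 := by
    linear_combination c 0 * hs + hs + c 0 * htwo
  have hne : c 0 ≠ 1 := by
    intro h
    rw [h, one_pow] at hc0
    rw [CharTwo.add_self_eq_zero, zero_add] at hc0
    exact one_ne_zero hc0
  exact orderOf_eq_prime h3 hne

include hc0 in
lemma combine (x : F) (n : ℕ) (hx : x ^ n = 1) (hn : ¬ 3 ∣ n) :
    orderOf (x * c 0) = 3 * orderOf x := by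
  have hdvd : orderOf x ∣ n := orderOf_dvd_of_pow_eq_one hx
  have h3 : ¬ 3 ∣ orderOf x := fun h => hn (h.trans hdvd)
  have hcop : (orderOf x).Coprime (orderOf (c 0)) := by
    rw [ord_c0 c hc0]
    exact ((Nat.Prime.coprime_iff_not_dvd (by norm_num)).2 h3).symm
  rw [(Commute.all x (c 0)).orderOf_mul_eq_mul_orderOf_of_coprime hcop, ord_c0 c hc0, mul_comm]

end Field

end ConwayAux

/-- For every `i ≥ 2`, `O(c_i · c_0) = N_0 · O(c_i) = 3 · O(c_i)` and
`O(a_i · a_0) = N_0 · O(a_i) = 3 · O(a_i)`, where `a_k = ∏_{j=0}^{k} c_j`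
(so `a_0 = c_0`) and `N_0 = 3`. -/
theorem conway_orderOf_mul_c0 (c : ℕ → AlgebraicClosure (ZMod 2))
    (hc0 : c 0 ^ 2 + c 0 + 1 = 0)
    (hrec : ∀ i : ℕ, c (i + 1) ^ 2 + c (i + 1) + ∏ j ∈ Finset.range (i + 1), c j = 0)
    (hnot : ∀ i : ℕ, c (i + 1) ∉ conwayL c (i + 1))
    (i : ℕ) (hi : 2 ≤ i) :
    orderOf (c i * c 0) = fermatN 0 * orderOf (c i) ∧
    orderOf (c i * c 0) = 3 * orderOf (c i) ∧
    orderOf ((∏ j ∈ Finset.range (i + 1), c j) * c 0)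
      = fermatN 0 * orderOf (∏ j ∈ Finset.range (i + 1), c j) ∧
    orderOf ((∏ j ∈ Finset.range (i + 1), c j) * c 0)
      = 3 * orderOf (∏ j ∈ Finset.range (i + 1), c j) := by
  obtain ⟨k, rfl⟩ : ∃ k, i = k + 2 := ⟨i - 2, by omega⟩
  have hf : fermatN 0 = 3 := rfl
  have e1 := ConwayAux.combine c hc0 (c (k + 2)) (ConwayAux.D (k + 2))
    (ConwayAux.normC c hc0 hrec k) (ConwayAux.hD3 (k + 2))
  have e2 := ConwayAux.combine c hc0 (ConwayAux.A c (k + 2)) (ConwayAux.D (k + 2))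
    (ConwayAux.normA c hc0 hrec (k + 1)) (ConwayAux.hD3 (k + 2))
  have hA : ConwayAux.A c (k + 2) = ∏ j ∈ Finset.range (k + 2 + 1), c j := rfl
  rw [hA] at e2
  exact ⟨by rw [hf]; exact e1, e1, by rw [hf]; exact e2, e2⟩
end
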